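/- Let κ be a singular cardinal (an uncountable cardinal with cf(κ) < κ) and give the ordinal space κ+1 (the set of ordinals ≤ κ) the order topology. Then Nt(κ+1) = κ; that is, κ+1 has a κ^op-like base but no λ^op-like base for any infinite cardinal λ < κ. -/

import Mathlib

open Cardinal Set TopologicalSpace

universe u

/-- A family `B` of subsets of a space is `κ`-op-like if every member of `B`
has fewer than `κ`-many supersets in `B`. -/
def OpLike {X : Type u} (κ : Cardinal.{u}) (B : Set (Set X)) : Prop :=
  ∀ U ∈ B, #{V ∈ B | U ⊆ V} < κ

/-- The Noetherian type of a space: the least infinite `κ` such that the space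
has a `κ`-op-like base. -/
noncomputable def NoetherianType (X : Type u) [TopologicalSpace X] : Cardinal.{u} :=
  sInf {κ : Cardinal.{u} | ℵ₀ ≤ κ ∧ ∃ B : Set (Set X), IsTopologicalBasis B ∧ OpLike κ B}

/-- The weight of a space: the least infinite `κ` such that the space has
a base of cardinality at most `κ`. -/
noncomputable def Weight (X : Type u) [TopologicalSpace X] : Cardinal.{u} :=
  sInf {κ : Cardinal.{u} | ℵ₀ ≤ κ ∧ ∃ B : Set (Set X), IsTopologicalBasis B ∧ #B ≤ κ}

/-- A π-base: a family of nonempty open sets such that every nonempty open set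
contains a member of the family. -/
def IsPiBase {X : Type u} [TopologicalSpace X] (B : Set (Set X)) : Prop :=
  (∀ U ∈ B, IsOpen U ∧ U.Nonempty) ∧
    ∀ U : Set X, IsOpen U → U.Nonempty → ∃ V ∈ B, V ⊆ U

/-- The π-weight of a space: the least infinite `κ` such that the space has
a π-base of cardinality at most `κ`. -/
noncomputable def PiWeight (X : Type u) [TopologicalSpace X] : Cardinal.{u} :=
  sInf {κ : Cardinal.{u} | ℵ₀ ≤ κ ∧ ∃ B : Set (Set X), IsPiBase B ∧ #B ≤ κ}

/-- The density of a space: the least infinite `κ` such that the space has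
a dense subset of cardinality at most `κ`. -/
noncomputable def Density (X : Type u) [TopologicalSpace X] : Cardinal.{u} :=
  sInf {κ : Cardinal.{u} | ℵ₀ ≤ κ ∧ ∃ D : Set X, Dense D ∧ #D ≤ κ}

/-- A GO-space: a linearly ordered set whose topology is induced by an order
embedding into some linearly ordered topological space (a linear order with
its order topology). -/
def IsGOSpace (X : Type u) [LinearOrder X] [tX : TopologicalSpace X] : Prop :=
  ∃ (Y : Type u) (lo : LinearOrder Y) (e : X → Y),
    @StrictMono X Y _ lo.toPartialOrder.toPreorder e ∧
    tX = TopologicalSpace.induced e (@Preorder.topology Y lo.toPartialOrder.toPreorder)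

/-- A space is `μ`-compact if every open cover has a subcover of cardinality
less than `μ`. -/
def MuCompact (μ : Cardinal.{u}) (X : Type u) [TopologicalSpace X] : Prop :=
  ∀ 𝒰 : Set (Set X), (∀ U ∈ 𝒰, IsOpen U) → ⋃₀ 𝒰 = Set.univ →
    ∃ 𝒱 ⊆ 𝒰, #𝒱 < μ ∧ ⋃₀ 𝒱 = Set.univ

/-- A cardinal is weakly inaccessible if it is uncountable, regular, and
a limit cardinal. -/
def IsWeaklyInaccessible (κ : Cardinal.{u}) : Prop :=
  ℵ₀ < κ ∧ κ.IsRegular ∧ ∀ μ < κ, Order.succ μ < κ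

/-- The ordinal space `κ + 1`: the linear order of all ordinals `≤ κ`,
realized as the order type `κ.ord + 1`, with its order topology. -/
noncomputable instance (o : Ordinal.{u}) : TopologicalSpace o.ToType :=
  Preorder.topology o.ToType

instance (o : Ordinal.{u}) : OrderTopology o.ToType := ⟨rfl⟩


namespace St12
open Ordinal

noncomputable def ex {o : Ordinal.{u}} (β : Ordinal.{u}) (h : β < o) : o.ToType :=
  ToType.mk (o := o) ⟨β, h⟩

noncomputable def jx {o : Ordinal.{u}} (x : o.ToType) : Ordinal.{u} :=
  ((ToType.mk (o := o)).symm x).1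

theorem jx_lt {o : Ordinal.{u}} (x : o.ToType) : jx x < o := ((ToType.mk (o := o)).symm x).2

theorem jx_ex {o β : Ordinal.{u}} (h : β < o) : jx (ex β h) = β := by
  simp [jx, ex]

theorem ex_jx {o : Ordinal.{u}} (x : o.ToType) : ex (jx x) (jx_lt x) = x := by
  simp [jx, ex]

theorem jx_lt_jx {o : Ordinal.{u}} {x y : o.ToType} : jx x < jx y ↔ x < y := by
  rw [jx, jx, Subtype.coe_lt_coe, OrderIso.lt_iff_lt]

theorem jx_le_jx {o : Ordinal.{u}} {x y : o.ToType} : jx x ≤ jx y ↔ x ≤ y := by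
  rw [jx, jx, Subtype.coe_le_coe, OrderIso.le_iff_le]

theorem jx_inj {o : Ordinal.{u}} {x y : o.ToType} (h : jx x = jx y) : x = y := by
  have h1 := ex_jx x
  have h2 := ex_jx y
  rw [← h1, ← h2]; congr 1

theorem ex_lt_ex {o : Ordinal.{u}} {β γ : Ordinal.{u}} (hβ : β < o) (hγ : γ < o) :
    ex β hβ < ex γ hγ ↔ β < γ := by
  rw [← jx_lt_jx, jx_ex, jx_ex]

theorem ex_le_ex {o : Ordinal.{u}} {β γ : Ordinal.{u}} (hβ : β < o) (hγ : γ < o) :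
    ex β hβ ≤ ex γ hγ ↔ β ≤ γ := by
  rw [← jx_le_jx, jx_ex, jx_ex]

theorem lt_ex_iff {o : Ordinal.{u}} {β : Ordinal.{u}} (hβ : β < o) {x : o.ToType} :
    x < ex β hβ ↔ jx x < β := by
  rw [← jx_lt_jx, jx_ex]

theorem ex_le_iff {o : Ordinal.{u}} {β : Ordinal.{u}} (hβ : β < o) {x : o.ToType} :
    ex β hβ ≤ x ↔ β ≤ jx x := by
  rw [← jx_le_jx, jx_ex]


theorem le_ex_iff {o : Ordinal.{u}} {β : Ordinal.{u}} (hβ : β < o) {x : o.ToType} :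
    x ≤ ex β hβ ↔ jx x ≤ β := by
  rw [← jx_le_jx, jx_ex]

theorem ex_lt_iff {o : Ordinal.{u}} {β : Ordinal.{u}} (hβ : β < o) {x : o.ToType} :
    ex β hβ < x ↔ β < jx x := by
  rw [← jx_lt_jx, jx_ex]

section Main

variable {κ : Cardinal.{u}}

theorem ord_lt_succ_ord : κ.ord < Order.succ κ.ord := Order.lt_succ _

/-- The top element of the space. -/
noncomputable def top (κ : Cardinal.{u}) : (Order.succ κ.ord).ToType :=
  ex κ.ord ord_lt_succ_ord

/-- The bottom element of the space. -/
noncomputable def bot (κ : Cardinal.{u}) : (Order.succ κ.ord).ToType :=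
  ex 0 ((zero_le).trans_lt ord_lt_succ_ord)

theorem le_top' (x : (Order.succ κ.ord).ToType) : x ≤ top κ := by
  rw [top, le_ex_iff]
  exact Order.lt_succ_iff.1 (jx_lt x)

theorem lt_top_iff' {x : (Order.succ κ.ord).ToType} : x < top κ ↔ jx x < κ.ord := by
  rw [top, lt_ex_iff]

theorem bot_le' (x : (Order.succ κ.ord).ToType) : bot κ ≤ x := by
  rw [bot, ex_le_iff]
  exact zero_le

theorem eq_bot_iff' {x : (Order.succ κ.ord).ToType} : x = bot κ ↔ jx x = 0 := by
  constructor
  · rintro rfl; rw [bot, jx_ex]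
  · intro h; apply jx_inj; rw [h, bot, jx_ex]

theorem isOpen_Ioc' (a b : (Order.succ κ.ord).ToType) : IsOpen (Ioc a b) := by
  rcases lt_or_ge (jx b + 1) (Order.succ κ.ord) with h | h
  · have heq : Ioc a b = Ioo a (ex (jx b + 1) h) := by
      ext x
      simp only [mem_Ioc, mem_Ioo, lt_ex_iff]
      rw [Ordinal.add_one_eq_succ, Order.lt_succ_iff, jx_le_jx]
    rw [heq]; exact isOpen_Ioo
  · have hb : ∀ x : (Order.succ κ.ord).ToType, x ≤ b := by
      intro x
      have hx : jx x < jx b + 1 := lt_of_lt_of_le (jx_lt x) h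
      rw [Ordinal.add_one_eq_succ, Order.lt_succ_iff, jx_le_jx] at hx
      exact hx
    have heq : Ioc a b = Ioi a := by
      ext x; exact ⟨fun h => h.1, fun h => ⟨h, hb x⟩⟩
    rw [heq]; exact isOpen_Ioi

theorem isOpen_bot (hinf : ℵ₀ ≤ κ) : IsOpen ({bot κ} : Set (Order.succ κ.ord).ToType) := by
  have h1 : (1 : Ordinal) < Order.succ κ.ord := by
    have : (1 : Ordinal) < κ.ord := by
      calc (1 : Ordinal) < Ordinal.omega0 := Ordinal.one_lt_omega0
        _ = Cardinal.aleph0.ord := Cardinal.ord_aleph0.symm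
        _ ≤ κ.ord := Cardinal.ord_le_ord.2 hinf
    exact this.trans ord_lt_succ_ord
  have heq : ({bot κ} : Set (Order.succ κ.ord).ToType) = Iio (ex 1 h1) := by
    ext x
    simp only [mem_singleton_iff, mem_Iio, lt_ex_iff, Ordinal.lt_one_iff_zero]
    exact eq_bot_iff'
  rw [heq]; exact isOpen_Iio

theorem exists_Ioc_sub {u : Set (Order.succ κ.ord).ToType} {x : (Order.succ κ.ord).ToType}
    (hu : IsOpen u) (hx : x ∈ u) (hxbot : x ≠ bot κ) :
    ∃ l, l < x ∧ Ioc l x ⊆ u := by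
  have hbl : bot κ < x := (bot_le' x).lt_of_ne (Ne.symm hxbot)
  obtain ⟨l, hl, hsub⟩ := exists_Ioc_subset_of_mem_nhds (hu.mem_nhds hx) ⟨bot κ, hbl⟩
  exact ⟨l, hl, hsub⟩

theorem card_Iic_lt (hinf : ℵ₀ ≤ κ) {a : (Order.succ κ.ord).ToType} (ha : a < top κ) :
    #(Iic a) < κ := by
  have hja : jx a < κ.ord := lt_top_iff'.1 ha
  have hν : (jx a + 1).card < κ := by
    have hc : (jx a + 1).card = (jx a).card + 1 := by
      rw [Ordinal.add_one_eq_succ]; simp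
    rw [hc]
    exact Cardinal.add_lt_of_lt hinf (Cardinal.lt_ord.1 hja)
      (Cardinal.one_lt_aleph0.trans_le hinf)
  have hle : #(Iic a) ≤ #(jx a + 1).ToType := by
    apply Cardinal.mk_le_of_injective (f := fun x : Iic a =>
      ex (o := jx a + 1) (jx x.1) (by
        rw [Ordinal.add_one_eq_succ, Order.lt_succ_iff]
        exact jx_le_jx.2 x.2))
    intro x y hxy
    have hj := congrArg jx hxy
    rw [jx_ex, jx_ex] at hj
    exact Subtype.ext (jx_inj hj)
  rw [Cardinal.mk_toType] at hle
  exact hle.trans_lt hν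

theorem exists_SX (hinf : ℵ₀ ≤ κ) :
    ∃ S : Set (Order.succ κ.ord).ToType, (∀ s ∈ S, s < top κ) ∧
      (∀ x, x < top κ → ∃ s ∈ S, x < s) ∧ #S ≤ κ.ord.cof := by
  obtain ⟨S0, hunb, hcard⟩ : ∃ S0 : Set κ.ord.ToType,
      Set.Unbounded (· < ·) S0 ∧ #S0 = κ.ord.cof := by
    obtain ⟨s, hs, hs'⟩ := Order.exists_cof_eq κ.ord.ToType
    refine ⟨s, fun a => ?_, by rw [hs', Ordinal.cof_toType]⟩
    obtain ⟨b, hb, hab⟩ := hs a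
    exact ⟨b, hb, not_lt.2 hab⟩
  set f : κ.ord.ToType → (Order.succ κ.ord).ToType :=
    fun y => ex (jx y) ((jx_lt y).trans ord_lt_succ_ord) with hf
  refine ⟨f '' S0, ?_, ?_, ?_⟩
  · rintro s ⟨y, _, rfl⟩
    rw [lt_top_iff', hf, jx_ex]
    exact jx_lt y
  · intro x hx
    have hx' : jx x < κ.ord := lt_top_iff'.1 hx
    have hx1 : jx x + 1 < κ.ord := by
      rw [Ordinal.add_one_eq_succ]
      exact (Cardinal.isSuccLimit_ord hinf).succ_lt hx'
    obtain ⟨y, hyS, hy⟩ := hunb (ex (o := κ.ord) (jx x + 1) hx1)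
    have hle : jx x + 1 ≤ jx y := by
      rw [← jx_ex (o := κ.ord) hx1, jx_le_jx]
      exact not_lt.1 hy
    refine ⟨f y, mem_image_of_mem _ hyS, ?_⟩
    rw [← jx_lt_jx, hf, jx_ex]
    calc jx x < jx x + 1 := by
          rw [Ordinal.add_one_eq_succ]; exact Order.lt_succ _
      _ ≤ jx y := hle
  · exact Cardinal.mk_image_le.trans_eq hcard

variable (S : Set (Order.succ κ.ord).ToType)

/-- The set of points which are limits of points of `S`. -/
def Cset : Set (Order.succ κ.ord).ToType :=
  {b | ∀ x, x < b → ∃ s ∈ S, x < s ∧ s < b}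

/-- `a` is beyond all points of `S` below `b`. -/
def Pprop (a b : (Order.succ κ.ord).ToType) : Prop :=
  ∀ s ∈ S, s < b → s ≤ a

/-- The κ-op-like base. -/
def BB (κ : Cardinal.{u}) (S : Set (Order.succ κ.ord).ToType) :
    Set (Set (Order.succ κ.ord).ToType) :=
  insert {bot κ}
    {u | ∃ a b, a < b ∧ (b ∈ Cset S ∨ Pprop S a b) ∧ u = Ioc a b}

theorem BB_basis (hinf : ℵ₀ ≤ κ) : IsTopologicalBasis (BB κ S) := by
  apply isTopologicalBasis_of_isOpen_of_nhds
  · rintro u hu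
    rcases hu with rfl | ⟨a, b, _, _, rfl⟩
    · exact isOpen_bot hinf
    · exact isOpen_Ioc' a b
  · intro x u hxu hu
    by_cases hx : x = bot κ
    · refine ⟨{bot κ}, mem_insert _ _, ?_, ?_⟩
      · rw [← hx]; exact rfl
      · rw [singleton_subset_iff, ← hx]; exact hxu
    · obtain ⟨l, hl, hsub⟩ := exists_Ioc_sub hu hxu hx
      by_cases hC : x ∈ Cset S
      · exact ⟨Ioc l x, mem_insert_iff.2 (Or.inr ⟨l, x, hl, Or.inl hC, rfl⟩),
          ⟨hl, le_rfl⟩, hsub⟩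
      · simp only [Cset, mem_setOf_eq] at hC
        push_neg at hC
        obtain ⟨x₀, hx₀x, hx₀⟩ := hC
        refine ⟨Ioc (max l x₀) x,
          mem_insert_iff.2 (Or.inr ⟨max l x₀, x, max_lt hl hx₀x, Or.inr ?_, rfl⟩),
          ⟨max_lt hl hx₀x, le_rfl⟩, (Ioc_subset_Ioc_left (le_max_left _ _)).trans hsub⟩
        intro s hsS hsx
        by_contra hgt
        push_neg at hgt
        have := hx₀ s hsS ((le_max_right l x₀).trans_lt hgt)
        exact absurd hsx (not_lt.2 this)

theorem card_Cset : #(Cset S) ≤ #S + 1 := by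
  classical
  set Cne : Set (Order.succ κ.ord).ToType :=
    {c | c ∈ Cset S ∧ ∃ c', c' ∈ Cset S ∧ c < c'} with hCne
  have key : ∀ c ∈ Cne, ∃ s ∈ S, c < s ∧ ∀ d ∈ Cset S, c < d → s < d := by
    rintro c ⟨hcC, hex⟩
    set D : Set Ordinal.{u} := jx '' {c' | c' ∈ Cset S ∧ c < c'} with hD
    have hne : D.Nonempty := by
      obtain ⟨c', hc', hcc'⟩ := hex
      exact ⟨jx c', ⟨c', ⟨hc', hcc'⟩, rfl⟩⟩
    have hmem := csInf_mem hne
    obtain ⟨c', ⟨hc'C, hcc'⟩, hjc'⟩ := hmem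
    obtain ⟨s, hsS, hcs, hsc'⟩ := hc'C c hcc'
    refine ⟨s, hsS, hcs, ?_⟩
    intro d hdC hcd
    have : jx c' ≤ jx d := by
      rw [hjc']
      exact csInf_le (OrderBot.bddBelow _) ⟨d, ⟨hdC, hcd⟩, rfl⟩
    exact hsc'.trans_le (jx_le_jx.1 this)
  choose! fS hfS hltf hfd using key
  have hinj : ∀ c1 ∈ Cne, ∀ c2 ∈ Cne, c1 ≠ c2 → fS c1 ≠ fS c2 := by
    have aux : ∀ c1 ∈ Cne, ∀ c2 ∈ Cne, c1 < c2 → fS c1 ≠ fS c2 := by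
      intro c1 h1 c2 h2 hlt
      have ha : fS c1 < c2 := hfd c1 h1 c2 h2.1 hlt
      have hb : c2 < fS c2 := hltf c2 h2
      exact ne_of_lt (ha.trans hb)
    intro c1 h1 c2 h2 hne
    rcases hne.lt_or_gt with h | h
    · exact aux c1 h1 c2 h2 h
    · exact fun he => aux c2 h2 c1 h1 h he.symm
  have h1 : #Cne ≤ #S := by
    apply Cardinal.mk_le_of_injective
      (f := fun c : Cne => (⟨fS c.1, hfS c.1 c.2⟩ : S))
    intro c1 c2 h12
    by_contra hne
    exact hinj c1.1 c1.2 c2.1 c2.2 (fun h => hne (Subtype.ext h)) (congrArg Subtype.val h12)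
  have hsplit : Cset S ⊆ Cne ∪ (Cset S \ Cne) := by
    intro c hc
    by_cases h : c ∈ Cne
    · exact Or.inl h
    · exact Or.inr ⟨hc, h⟩
  have hsub : (Cset S \ Cne).Subsingleton := by
    rintro c1 ⟨hc1, hn1⟩ c2 ⟨hc2, hn2⟩
    by_contra hne
    rcases Ne.lt_or_gt hne with h | h
    · exact hn1 ⟨hc1, c2, hc2, h⟩
    · exact hn2 ⟨hc2, c1, hc1, h⟩
  calc #(Cset S) ≤ #(Cne ∪ (Cset S \ Cne) : Set _) := Cardinal.mk_le_mk_of_subset hsplit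
    _ ≤ #Cne + #(Cset S \ Cne : Set _) := Cardinal.mk_union_le _ _
    _ ≤ #S + 1 := add_le_add h1 (Cardinal.mk_le_one_iff_set_subsingleton.2 hsub)

theorem BB_opLike (hinf : ℵ₀ ≤ κ) (hsing : κ.ord.cof < κ)
    (hS1 : ∀ s ∈ S, s < top κ) (hS2 : ∀ x, x < top κ → ∃ s ∈ S, x < s)
    (hScard : #S ≤ κ.ord.cof) : OpLike κ (BB κ S) := by
  intro U hU
  have h1κ : (1 : Cardinal) < κ := Cardinal.one_lt_aleph0.trans_le hinf
  rcases hU with rfl | ⟨a, b, hab, hallow, rfl⟩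
  · -- U = {bot κ}
    have hsub : {V ∈ BB κ S | {bot κ} ⊆ V} ⊆ {({bot κ} : Set _)} := by
      rintro V ⟨hV, hUV⟩
      rcases hV with rfl | ⟨a, b, hab, _, rfl⟩
      · rfl
      · have : bot κ ∈ Ioc a b := hUV rfl
        exact absurd this.1 (not_lt.2 (bot_le' a))
    calc #{V ∈ BB κ S | {bot κ} ⊆ V} ≤ #({({bot κ} : Set _)} : Set (Set _)) :=
          Cardinal.mk_le_mk_of_subset hsub
      _ = 1 := Cardinal.mk_singleton _
      _ < κ := h1κ
  · -- U = Ioc a b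
    have hbtop : b ≤ top κ := le_top' b
    have hatop : a < top κ := hab.trans_le hbtop
    obtain ⟨s₀, hs₀S, hs₀⟩ := hS2 a hatop
    have hs₀top : s₀ < top κ := hS1 s₀ hs₀S
    have hsub : {V ∈ BB κ S | Ioc a b ⊆ V} ⊆
        (fun p : _ × _ => Ioc p.1 p.2) '' ((Iic a) ×ˢ (Cset S ∪ Iic s₀)) := by
      rintro V ⟨hV, hUV⟩
      rcases hV with rfl | ⟨a', b', ha'b', hallow', rfl⟩
      · have : b ∈ ({bot κ} : Set _) := hUV ⟨hab, le_rfl⟩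
        rw [mem_singleton_iff] at this
        exact absurd (this ▸ hab) (not_lt.2 (bot_le' a))
      · obtain ⟨hbb', ha'a⟩ := (Ioc_subset_Ioc_iff hab).1 hUV
        refine ⟨(a', b'), ⟨ha'a, ?_⟩, rfl⟩
        rcases hallow' with hC | hP
        · exact Or.inl hC
        · right
          rw [mem_Iic]
          by_contra hgt
          push_neg at hgt
          exact absurd ((hP s₀ hs₀S hgt).trans ha'a) (not_le.2 hs₀)
    have hC : #(Cset S ∪ Iic s₀ : Set _) < κ := by
      calc #(Cset S ∪ Iic s₀ : Set _) ≤ #(Cset S) + #(Iic s₀) := Cardinal.mk_union_le _ _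
        _ ≤ (#S + 1) + #(Iic s₀) := add_le_add_left (card_Cset S) _
        _ < κ := Cardinal.add_lt_of_lt hinf
            (Cardinal.add_lt_of_lt hinf (hScard.trans_lt hsing) h1κ)
            (card_Iic_lt hinf hs₀top)
    calc #{V ∈ BB κ S | Ioc a b ⊆ V}
        ≤ #((Iic a) ×ˢ (Cset S ∪ Iic s₀)) :=
          (Cardinal.mk_le_mk_of_subset hsub).trans Cardinal.mk_image_le
      _ = #(Iic a) * #(Cset S ∪ Iic s₀ : Set _) := Cardinal.mk_setProd _ _
      _ < κ := Cardinal.mul_lt_of_lt hinf (card_Iic_lt hinf hatop) hC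

theorem no_small_base (hsing : κ.ord.cof < κ) (lam : Cardinal.{u})
    (hlam0 : ℵ₀ ≤ lam) (hlam : lam < κ) :
    ¬ ∃ B : Set (Set (Order.succ κ.ord).ToType), IsTopologicalBasis B ∧ OpLike lam B := by
  classical
  rintro ⟨ℬ, hbasis, hop⟩
  set θ := Order.succ lam with hθ
  have hθreg : θ.IsRegular := Cardinal.isRegular_succ hlam0
  have hθκ : θ < κ := by
    rcases lt_or_eq_of_le (Order.succ_le_of_lt hlam) with h | h
    · exact h
    · exfalso
      have : κ ≤ κ.ord.cof := h ▸ hθreg.2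
      exact absurd this (not_le.2 hsing)
  have hθO : θ.ord < Order.succ κ.ord :=
    (Cardinal.ord_lt_ord.2 hθκ).trans ord_lt_succ_ord
  set q : (Order.succ κ.ord).ToType := ex θ.ord hθO with hqdef
  have jq : jx q = θ.ord := jx_ex _
  have hqlim : Order.IsSuccLimit θ.ord := Cardinal.isSuccLimit_ord hθreg.1
  have hbotq : bot κ < q := by
    rw [bot, hqdef, ex_lt_ex]
    exact hqlim.pos
  -- small subsets of Iio q are bounded
  have bound : ∀ A : Set (Order.succ κ.ord).ToType, (∀ t ∈ A, t < q) → #A < θ →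
      ∃ b, b < q ∧ ∀ t ∈ A, t ≤ b := by
    intro A hA hcard
    have hsup : (⨆ t : A, jx t.1) < θ.ord := by
      apply Ordinal.iSup_lt_ord
      · rwa [hθreg.cof_eq]
      · intro t
        rw [← jq]
        exact jx_lt_jx.2 (hA t.1 t.2)
    refine ⟨ex (⨆ t : A, jx t.1) (hsup.trans hθO), ?_, ?_⟩
    · rw [hqdef, ex_lt_ex]; exact hsup
    · intro t ht
      rw [le_ex_iff]
      exact Ordinal.le_iSup (fun t : A => jx t.1) (⟨t, ht⟩ : A)
  -- basis elements below a given point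
  have getU : ∀ b, b < q → ∃ U ∈ ℬ, q ∈ U ∧ U ⊆ Ioc b q := by
    intro b hb
    obtain ⟨U, hUB, hqU, hUsub⟩ :=
      hbasis.exists_subset_of_mem_open (⟨hb, le_rfl⟩ : q ∈ Ioc b q) (isOpen_Ioc' b q)
    exact ⟨U, hUB, hqU, hUsub⟩
  -- the canonical left endpoint of a neighborhood of q
  have hmlt : ∀ V : Set (Order.succ κ.ord).ToType,
      sInf (jx '' {x | x < q ∧ Ioc x q ⊆ V}) < Order.succ κ.ord := by
    intro V
    rcases eq_empty_or_nonempty {x | x < q ∧ Ioc x q ⊆ V} with he | hne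
    · rw [he, image_empty, Ordinal.sInf_empty]
      exact (zero_le).trans_lt ord_lt_succ_ord
    · obtain ⟨x, _, hjx⟩ := csInf_mem (hne.image jx)
      rw [← hjx]
      exact jx_lt x
  set m : Set (Order.succ κ.ord).ToType → (Order.succ κ.ord).ToType :=
    fun V => ex (sInf (jx '' {x | x < q ∧ Ioc x q ⊆ V})) (hmlt V) with hmdef
  have hm : ∀ V ∈ ℬ, q ∈ V → m V < q ∧ Ioc (m V) q ⊆ V := by
    intro V hV hqV
    have hne : {x | x < q ∧ Ioc x q ⊆ V}.Nonempty := by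
      obtain ⟨l, hl, hsub⟩ := exists_Ioc_subset_of_mem_nhds
        ((hbasis.isOpen hV).mem_nhds hqV) ⟨bot κ, hbotq⟩
      exact ⟨l, hl, hsub⟩
    obtain ⟨x0, hx0, hjx0⟩ := csInf_mem (hne.image jx)
    have hmeq : m V = x0 := by
      apply jx_inj
      rw [hmdef, jx_ex, ← hjx0]
    rw [hmeq]
    exact hx0
  set T : Set (Order.succ κ.ord).ToType := {x | ∃ V ∈ ℬ, q ∈ V ∧ m V = x} with hTdef
  have hTq : ∀ t ∈ T, t < q := by
    rintro t ⟨V, hV, hqV, rfl⟩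
    exact (hm V hV hqV).1
  have hTunb : ∀ b, b < q → ∃ t ∈ T, b ≤ t := by
    intro b hb
    obtain ⟨U, hUB, hqU, hUsub⟩ := getU b hb
    refine ⟨m U, ⟨U, hUB, hqU, rfl⟩, ?_⟩
    by_contra hlt
    push_neg at hlt
    have : b ∈ U := (hm U hUB hqU).2 ⟨hlt, hb.le⟩
    exact absurd (hUsub this).1 (lt_irrefl b)
  have hTsmall : ∀ b, b < q → #(T ∩ Iic b : Set _) < lam := by
    intro b hb
    obtain ⟨U, hUB, hqU, hUsub⟩ := getU b hb
    have hex : ∀ t : ↥(T ∩ Iic b), ∃ V, (V ∈ ℬ ∧ U ⊆ V) ∧ m V = t.1 := by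
      rintro ⟨t, ⟨V, hV, hqV, rfl⟩, htb⟩
      refine ⟨V, ⟨hV, ?_⟩, rfl⟩
      exact hUsub.trans ((Ioc_subset_Ioc_left htb).trans (hm V hV hqV).2)
    choose F hF1 hF2 using hex
    have hle : #(T ∩ Iic b : Set _) ≤ #{V ∈ ℬ | U ⊆ V} := by
      apply Cardinal.mk_le_of_injective (f := fun t => (⟨F t, hF1 t⟩ : ↥{V ∈ ℬ | U ⊆ V}))
      intro t1 t2 h12
      apply Subtype.ext
      have hFF : F t1 = F t2 := congrArg Subtype.val h12
      rw [← hF2 t1, ← hF2 t2, hFF]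
    exact hle.trans_lt (hop U hUB)
  rcases lt_or_ge lam #T with hbig | hsmall
  · obtain ⟨T₀, hT₀T, hT₀card⟩ := Cardinal.le_mk_iff_exists_subset.1 hbig.le
    obtain ⟨b, hbq, hbd⟩ := bound T₀ (fun t ht => hTq t (hT₀T ht))
      (hT₀card ▸ Order.lt_succ lam)
    have h1 : #T₀ ≤ #(T ∩ Iic b : Set _) :=
      Cardinal.mk_le_mk_of_subset (fun t ht => ⟨hT₀T ht, hbd t ht⟩)
    rw [hT₀card] at h1
    exact absurd (h1.trans_lt (hTsmall b hbq)) (lt_irrefl lam)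
  · obtain ⟨b, hbq, hbd⟩ := bound T hTq (hsmall.trans_lt (Order.lt_succ lam))
    have hjb : jx b < θ.ord := by rw [← jq]; exact jx_lt_jx.2 hbq
    have hb1 : jx b + 1 < θ.ord := by
      rw [Ordinal.add_one_eq_succ]
      exact hqlim.succ_lt hjb
    obtain ⟨t, htT, hbt⟩ := hTunb (ex (jx b + 1) (hb1.trans hθO)) (by
      rw [hqdef, ex_lt_ex]; exact hb1)
    have hbb : b < ex (jx b + 1) (hb1.trans hθO) := by
      rw [lt_ex_iff, Ordinal.add_one_eq_succ]
      exact Order.lt_succ _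
    exact absurd (hbt.trans (hbd t htT)) (not_le.2 hbb)

end Main
end St12

theorem statement12 (κ : Cardinal.{u}) (hinf : ℵ₀ ≤ κ) (hsing : κ.ord.cof < κ) :
    NoetherianType (Order.succ κ.ord).ToType = κ ∧
    (∃ B : Set (Set (Order.succ κ.ord).ToType), IsTopologicalBasis B ∧ OpLike κ B) ∧
    ∀ lam : Cardinal.{u}, ℵ₀ ≤ lam → lam < κ →
      ¬ ∃ B : Set (Set (Order.succ κ.ord).ToType), IsTopologicalBasis B ∧ OpLike lam B := by
  obtain ⟨S, hS1, hS2, hScard⟩ := St12.exists_SX hinf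
  have hbasis := St12.BB_basis S hinf
  have hopl := St12.BB_opLike S hinf hsing hS1 hS2 hScard
  have hbase : ∃ B : Set (Set (Order.succ κ.ord).ToType),
      IsTopologicalBasis B ∧ OpLike κ B := ⟨_, hbasis, hopl⟩
  have hno : ∀ lam : Cardinal.{u}, ℵ₀ ≤ lam → lam < κ →
      ¬ ∃ B : Set (Set (Order.succ κ.ord).ToType), IsTopologicalBasis B ∧ OpLike lam B :=
    fun lam h0 hl => St12.no_small_base hsing lam h0 hl
  refine ⟨?_, hbase, hno⟩
  rw [NoetherianType]
  apply le_antisymm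
  · exact csInf_le' ⟨hinf, hbase⟩
  · refine le_csInf ⟨κ, ⟨hinf, hbase⟩⟩ ?_
    rintro lam' ⟨h0, hB⟩
    by_contra hlt
    push_neg at hlt
    exact hno lam' h0 hlt hB
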